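/- arXiv:1108.0718 — 3 statements merged into one kernel-verified Lean document; each statement's English description precedes it below -/
import Mathlib

section
/- Let W ⊆ GL(ℓ,ℂ) be an irreducible finite Coxeter group with basic invariants p₁,…,p_ℓ scaled so that det J = Δ, where J = (∂p_i/∂x_j) and Δ is the product of linear forms defining the reflecting hyperplanes. Since Δ² is W-invariant, there is a unique polynomial a ∈ ℂ[y₁,…,y_ℓ] with Δ² = a(p₁,…,p_ℓ); write ∂_{p_i}(Δ²) := (∂a/∂y_i)(p₁,…,p_ℓ) ∈ S. Let m^i_j denote the (i,j) entry of the adjugate matrix of Jᵗ. Then for all i, j ∈ {1,…,ℓ}: ∂_{p_i}(Δ²)·m^ℓ_j − ∂_{p_ℓ}(Δ²)·m^i_j lies in the principal ideal of S generated by Δ. -/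
open MvPolynomial Matrix

/-- Substitution action of a matrix on polynomials: `subAct ℓ g f = f(g · x)`,
i.e. the substitution `xᵢ ↦ ∑ⱼ gᵢⱼ xⱼ`.  A polynomial `f` is `W`-invariant for the
action `(w·f)(x) = f(w⁻¹x)` iff `subAct ℓ w f = f` for all `w ∈ W`. -/
noncomputable def subAct (ℓ : ℕ) (g : Matrix (Fin ℓ) (Fin ℓ) ℂ) :
    MvPolynomial (Fin ℓ) ℂ →ₐ[ℂ] MvPolynomial (Fin ℓ) ℂ :=
  aeval fun i => ∑ j, C (g i j) * X j

/-- `f` is invariant under every element of `W`. -/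
def IsInvariantPoly (ℓ : ℕ) (W : Subgroup (GL (Fin ℓ) ℂ)) (f : MvPolynomial (Fin ℓ) ℂ) : Prop :=
  ∀ w ∈ W, subAct ℓ (↑w : Matrix (Fin ℓ) (Fin ℓ) ℂ) f = f

/-- A reflection: an element of order 2 whose fixed-point space is a hyperplane. -/
def IsReflection (ℓ : ℕ) (w : GL (Fin ℓ) ℂ) : Prop :=
  w ≠ 1 ∧ w * w = 1 ∧
    Module.finrank ℂ (LinearMap.ker
      ((↑w : Matrix (Fin ℓ) (Fin ℓ) ℂ).mulVecLin
        - (LinearMap.id : (Fin ℓ → ℂ) →ₗ[ℂ] (Fin ℓ → ℂ)))) = ℓ - 1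

/-- A real orthogonal matrix inside `GL(ℓ,ℂ)`. -/
def IsRealOrthogonal (ℓ : ℕ) (A : Matrix (Fin ℓ) (Fin ℓ) ℂ) : Prop :=
  (∀ i j, (A i j).im = 0) ∧ Aᵀ * A = 1

/-- A finite Coxeter group: a finite subgroup of `GL(ℓ,ℂ)`, conjugate to a subgroup of
the real orthogonal group, generated by reflections. -/
structure IsFiniteCoxeterGroup (ℓ : ℕ) (W : Subgroup (GL (Fin ℓ) ℂ)) : Prop where
  finite : Set.Finite (W : Set (GL (Fin ℓ) ℂ))
  conjOrth : ∃ g : GL (Fin ℓ) ℂ, ∀ w ∈ W,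
    IsRealOrthogonal ℓ (↑(g * w * g⁻¹) : Matrix (Fin ℓ) (Fin ℓ) ℂ)
  genByReflections : Subgroup.closure {w : GL (Fin ℓ) ℂ | w ∈ W ∧ IsReflection ℓ w} = W

/-- The representation of `W` on `ℂ^ℓ` is irreducible: the only invariant subspaces
are `0` and `ℂ^ℓ`. -/
def IsIrreducibleRep (ℓ : ℕ) (W : Subgroup (GL (Fin ℓ) ℂ)) : Prop :=
  ∀ U : Submodule ℂ (Fin ℓ → ℂ),
    (∀ w ∈ W, ∀ v ∈ U, (↑w : Matrix (Fin ℓ) (Fin ℓ) ℂ).mulVec v ∈ U) → U = ⊥ ∨ U = ⊤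

/-- `p₁,…,p_ℓ` are basic invariants of `W` of degrees `d₁,…,d_ℓ`: homogeneous,
invariant, algebraically independent, generating the ring of invariants. -/
structure AreBasicInvariants (ℓ : ℕ) (W : Subgroup (GL (Fin ℓ) ℂ))
    (p : Fin ℓ → MvPolynomial (Fin ℓ) ℂ) (d : Fin ℓ → ℕ) : Prop where
  homogeneous : ∀ i, (p i).IsHomogeneous (d i)
  invariant : ∀ i, IsInvariantPoly ℓ W (p i)
  algInd : AlgebraicIndependent ℂ p
  generate : ∀ f, IsInvariantPoly ℓ W f ↔ f ∈ Algebra.adjoin ℂ (Set.range p)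

/-- The Jacobian matrix `J = (∂pᵢ/∂xⱼ)`. -/
noncomputable def jacobian (ℓ : ℕ) (p : Fin ℓ → MvPolynomial (Fin ℓ) ℂ) :
    Matrix (Fin ℓ) (Fin ℓ) (MvPolynomial (Fin ℓ) ℂ) :=
  Matrix.of fun i j => pderiv j (p i)

/-- The zero set of a polynomial. -/
def zeroSet (ℓ : ℕ) (f : MvPolynomial (Fin ℓ) ℂ) : Set (Fin ℓ → ℂ) :=
  {v | eval v f = 0}

/-- The reflection arrangement of `W`: the set of fixed hyperplanes of reflections of `W`. -/
def ReflArrangement (ℓ : ℕ) (W : Subgroup (GL (Fin ℓ) ℂ)) : Set (Set (Fin ℓ → ℂ)) :=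
  {H | ∃ w ∈ W, IsReflection ℓ w ∧
    H = {v | (↑w : Matrix (Fin ℓ) (Fin ℓ) ℂ).mulVec v = v}}

/-- `α` is a set of linear forms containing exactly one defining linear form for each
reflecting hyperplane of `W`; then `Δ = ∏_{f ∈ α} f`. -/
structure AreDefiningForms (ℓ : ℕ) (W : Subgroup (GL (Fin ℓ) ℂ))
    (α : Finset (MvPolynomial (Fin ℓ) ℂ)) : Prop where
  linear : ∀ f ∈ α, f.IsHomogeneous 1
  injOn : Set.InjOn (zeroSet ℓ) ↑α
  onto : zeroSet ℓ '' ↑α = ReflArrangement ℓ W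

section DetLemmas

variable {R N : Type*} [CommRing R] [Fintype N] [DecidableEq N]

lemma det_one_updateRow_two {i l : N} (hil : i ≠ l) (u w : N → R) :
    (((1 : Matrix N N R).updateRow i u).updateRow l w).det = u i * w l - u l * w i := by
  classical
  set D := ((1 : Matrix N N R).updateRow i u).updateRow l w with hD
  have hDapp : ∀ r s, D r s =
      if r = l then w s else if r = i then u s else (1 : Matrix N N R) r s := by
    intro r s
    rw [hD, Matrix.updateRow_apply, Matrix.updateRow_apply]
  rw [Matrix.det_apply']
  have hzero : ∀ π ∈ (Finset.univ : Finset (Equiv.Perm N)),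
      π ∉ ({1, Equiv.swap i l} : Finset (Equiv.Perm N)) →
      (↑↑(Equiv.Perm.sign π) * ∏ s, D (π s) s : R) = 0 := by
    intro π _ hπ
    have hex : ∃ s, π s ≠ s ∧ π s ≠ i ∧ π s ≠ l := by
      by_contra hcon
      push_neg at hcon
      have hmem : ∀ s, π s = s ∨ π s = i ∨ π s = l := by
        intro s
        by_cases h1 : π s = s
        · exact Or.inl h1
        by_cases h2 : π s = i
        · exact Or.inr (Or.inl h2)
        exact Or.inr (Or.inr (hcon s h1 h2))
      have hcases : π = 1 ∨ π = Equiv.swap i l := by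
        by_cases hi : π i = i
        · left
          have hl : π l = l := by
            rcases hmem l with h | h | h
            · exact h
            · exact absurd (π.injective (h.trans hi.symm)) hil.symm
            · exact h
          ext s
          rcases hmem s with h | h | h
          · simpa using h
          · have hsi := π.injective (h.trans hi.symm)
            subst hsi; simpa using h
          · have hsl := π.injective (h.trans hl.symm)
            subst hsl; simpa using h
        · right
          have hi' : π i = l := by
            rcases hmem i with h | h | h
            · exact absurd h hi
            · exact absurd h hi
            · exact h
          have hl' : π l = i := by
            rcases hmem l with h | h | h
            · exact absurd (π.injective (hi'.trans h.symm)) hil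
            · exact h
            · exact absurd (π.injective (hi'.trans h.symm)) hil
          ext s
          by_cases hsi : s = i
          · subst hsi; rw [Equiv.swap_apply_left]; exact hi'
          by_cases hsl : s = l
          · subst hsl; rw [Equiv.swap_apply_right]; exact hl'
          rw [Equiv.swap_apply_of_ne_of_ne hsi hsl]
          rcases hmem s with h | h | h
          · exact h
          · exact absurd (π.injective (h.trans hl'.symm)) hsl
          · exact absurd (π.injective (h.trans hi'.symm)) hsi
      simp only [Finset.mem_insert, Finset.mem_singleton] at hπ
      tauto
    obtain ⟨s, hs1, hs2, hs3⟩ := hex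
    have : D (π s) s = 0 := by
      rw [hDapp, if_neg hs3, if_neg hs2]
      exact Matrix.one_apply_ne hs1
    exact mul_eq_zero_of_right _ (Finset.prod_eq_zero (Finset.mem_univ s) this)
  rw [← Finset.sum_subset (Finset.subset_univ ({1, Equiv.swap i l} : Finset (Equiv.Perm N))) hzero]
  have hne : (1 : Equiv.Perm N) ≠ Equiv.swap i l := by
    intro h
    have h2 := congrArg (fun e : Equiv.Perm N => e i) h
    simp only [Equiv.Perm.one_apply, Equiv.swap_apply_left] at h2
    exact hil h2
  rw [Finset.sum_pair hne]
  have t1 : (∏ s, D ((1 : Equiv.Perm N) s) s) = u i * w l := by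
    have houter : ∀ x ∈ (Finset.univ : Finset N), x ∉ ({i, l} : Finset N) →
        D ((1 : Equiv.Perm N) x) x = 1 := by
      intro x _ hx
      simp only [Finset.mem_insert, Finset.mem_singleton, not_or] at hx
      rw [Equiv.Perm.one_apply, hDapp, if_neg hx.2, if_neg hx.1]
      exact Matrix.one_apply_eq x
    rw [← Finset.prod_subset (Finset.subset_univ ({i, l} : Finset N)) houter,
      Finset.prod_pair hil]
    simp [hDapp, hil]
  have t2 : (∏ s, D (Equiv.swap i l s) s) = w i * u l := by
    have houter : ∀ x ∈ (Finset.univ : Finset N), x ∉ ({i, l} : Finset N) →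
        D (Equiv.swap i l x) x = 1 := by
      intro x _ hx
      simp only [Finset.mem_insert, Finset.mem_singleton, not_or] at hx
      rw [Equiv.swap_apply_of_ne_of_ne hx.1 hx.2, hDapp, if_neg hx.2, if_neg hx.1]
      exact Matrix.one_apply_eq x
    rw [← Finset.prod_subset (Finset.subset_univ ({i, l} : Finset N)) houter,
      Finset.prod_pair hil]
    simp [hDapp, hil]
  rw [t1, t2, Equiv.Perm.sign_one, Equiv.Perm.sign_swap hil]
  push_cast
  ring

lemma det_perm_updateRow_two {i l : N} (hil : i ≠ l) (σ : Equiv.Perm N) (u w : N → R) :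
    (((σ.toPEquiv.toMatrix : Matrix N N R).updateRow i u).updateRow l w).det
      = ((Equiv.Perm.sign σ : ℤ) : R) * (u (σ i) * w (σ l) - u (σ l) * w (σ i)) := by
  have hfac : ((σ.toPEquiv.toMatrix : Matrix N N R).updateRow i u).updateRow l w
      = (((1 : Matrix N N R).updateRow i (u ∘ σ)).updateRow l (w ∘ σ)) * σ.toPEquiv.toMatrix := by
    rw [PEquiv.mul_toMatrix_toPEquiv]
    ext r s
    by_cases hr : r = l
    · subst hr
      simp
    · by_cases hr' : r = i
      · subst hr'
        simp [Matrix.updateRow_ne hr]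
      · simp only [Matrix.updateRow_ne hr, Matrix.updateRow_ne hr', Matrix.submatrix_apply,
          id_eq]
        simp [PEquiv.toMatrix_apply, Equiv.toPEquiv_apply, Matrix.one_apply, Equiv.eq_symm_apply]
  rw [hfac, Matrix.det_mul, det_one_updateRow_two hil]
  have : (σ.toPEquiv.toMatrix : Matrix N N R).det = ((Equiv.Perm.sign σ : ℤ) : R) :=
    Matrix.det_permutation σ
  rw [this]
  simp only [Function.comp_apply]
  ring

lemma updateRow_mul_right (B A : Matrix N N R) (r : N) (v : N → R) :
    (B.updateRow r v) * A = (B * A).updateRow r (Matrix.vecMul v A) := by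
  ext s t
  by_cases h : s = r
  · subst h
    simp [Matrix.mul_apply, Matrix.vecMul, dotProduct]
  · simp [Matrix.mul_apply, Matrix.updateRow_ne h]

lemma adjugate_minor_dvd [IsDomain R] (A : Matrix N N R) (hA : A.det ≠ 0) (i l k j : N) :
    A.det ∣ A.adjugate i k * A.adjugate l j - A.adjugate l k * A.adjugate i j := by
  classical
  by_cases hil : i = l
  · subst hil
    simp [mul_comm]
  by_cases hkj : k = j
  · subst hkj
    simp [mul_comm]
  -- build a permutation with σ i = k, σ l = j
  set e₁ := Equiv.swap i k with he₁
  set e₂ := Equiv.swap (e₁ l) j with he₂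
  set σ := e₁.trans e₂ with hσ
  have hσi : σ i = k := by
    have h1 : e₁ i = k := Equiv.swap_apply_left i k
    have h2 : e₁ l ≠ k := by
      intro h
      apply hil
      have : e₁ l = e₁ i := by rw [h, h1]
      exact (Equiv.injective e₁ this).symm ▸ rfl
    have h3 : e₂ k = k := Equiv.swap_apply_of_ne_of_ne (Ne.symm h2) hkj
    simp [hσ, h1, h3]
  have hσl : σ l = j := by
    have : e₂ (e₁ l) = j := Equiv.swap_apply_left _ j
    simp [hσ, this]
  set M := ((σ.toPEquiv.toMatrix : Matrix N N R).updateRow i (A.adjugate i)).updateRow l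
    (A.adjugate l) with hM
  have hdetM : M.det = ((Equiv.Perm.sign σ : ℤ) : R) *
      (A.adjugate i k * A.adjugate l j - A.adjugate i j * A.adjugate l k) := by
    rw [hM, det_perm_updateRow_two hil, hσi, hσl]
  -- compute M * A
  have hrowi : Matrix.vecMul (A.adjugate i) A = A.det • (Pi.single i 1 : N → R) := by
    funext s
    have : (A.adjugate * A) i s = (A.det • (1 : Matrix N N R)) i s := by
      rw [Matrix.adjugate_mul]
    simpa [Matrix.mul_apply, Matrix.vecMul, dotProduct, Matrix.one_apply,
      Pi.single_apply, eq_comm] using this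
  have hrowl : Matrix.vecMul (A.adjugate l) A = A.det • (Pi.single l 1 : N → R) := by
    funext s
    have : (A.adjugate * A) l s = (A.det • (1 : Matrix N N R)) l s := by
      rw [Matrix.adjugate_mul]
    simpa [Matrix.mul_apply, Matrix.vecMul, dotProduct, Matrix.one_apply,
      Pi.single_apply, eq_comm] using this
  have hMA : M * A = (((σ.toPEquiv.toMatrix : Matrix N N R) * A).updateRow i
      (A.det • (Pi.single i 1 : N → R))).updateRow l (A.det • (Pi.single l 1 : N → R)) := by
    rw [hM, updateRow_mul_right, updateRow_mul_right, hrowi, hrowl]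
  set C := ((((σ.toPEquiv.toMatrix : Matrix N N R) * A).updateRow i
      (Pi.single i 1)).updateRow l (Pi.single l 1)).det with hC
  have hdetMA : (M * A).det = A.det * (A.det * C) := by
    rw [hMA, Matrix.det_updateRow_smul]
    congr 1
    have hcomm : ∀ (B : Matrix N N R) (u w : N → R),
        (B.updateRow i u).updateRow l w = (B.updateRow l w).updateRow i u := by
      intro B u w
      ext r s
      rcases eq_or_ne r l with rfl | hrl
      · rw [Matrix.updateRow_self, Matrix.updateRow_ne (Ne.symm hil), Matrix.updateRow_self]
      · rcases eq_or_ne r i with rfl | hri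
        · rw [Matrix.updateRow_ne hrl, Matrix.updateRow_self, Matrix.updateRow_self]
        · rw [Matrix.updateRow_ne hrl, Matrix.updateRow_ne hri, Matrix.updateRow_ne hri,
            Matrix.updateRow_ne hrl]
    rw [hcomm, Matrix.det_updateRow_smul, ← hcomm]
  have hkey : M.det * A.det = A.det * (A.det * C) := by
    rw [← Matrix.det_mul, hdetMA]
  set ε := ((Equiv.Perm.sign σ : ℤ) : R) with hε
  have hεsq : ε * ε = 1 := by
    rcases Int.units_eq_one_or (Equiv.Perm.sign σ) with h | h <;> rw [hε, h] <;> norm_num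
  have hcancel : ε * (A.adjugate i k * A.adjugate l j - A.adjugate i j * A.adjugate l k)
      = A.det * C := by
    apply mul_right_cancel₀ hA
    calc ε * (A.adjugate i k * A.adjugate l j - A.adjugate i j * A.adjugate l k) * A.det
        = M.det * A.det := by rw [hdetM]
      _ = A.det * (A.det * C) := hkey
      _ = A.det * C * A.det := by ring
  have hfinal : A.adjugate i k * A.adjugate l j - A.adjugate i j * A.adjugate l k
      = A.det * (ε * C) := by
    calc A.adjugate i k * A.adjugate l j - A.adjugate i j * A.adjugate l k
        = ε * (ε * (A.adjugate i k * A.adjugate l j - A.adjugate i j * A.adjugate l k)) := by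
          rw [← mul_assoc, hεsq, one_mul]
      _ = ε * (A.det * C) := by rw [hcancel]
      _ = A.det * (ε * C) := by ring
  have : A.adjugate i k * A.adjugate l j - A.adjugate l k * A.adjugate i j
      = A.det * (ε * C) := by rw [← hfinal]; ring
  exact ⟨ε * C, this⟩

end DetLemmas

lemma pderiv_aeval_self {ℓ : ℕ} (p : Fin ℓ → MvPolynomial (Fin ℓ) ℂ) (j : Fin ℓ)
    (a : MvPolynomial (Fin ℓ) ℂ) :
    pderiv j (aeval p a) = ∑ k, aeval p (pderiv k a) * pderiv j (p k) := by
  classical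
  induction a using MvPolynomial.induction_on with
  | C c => simp
  | add f g hf hg => simp only [map_add, hf, hg, add_mul, Finset.sum_add_distrib]
  | mul_X f s hf =>
    have hXk : ∀ k : Fin ℓ, (aeval p) (pderiv k (X s : MvPolynomial (Fin ℓ) ℂ))
        = if s = k then 1 else 0 := by
      intro k
      rw [pderiv_X]
      rcases eq_or_ne s k with rfl | h
      · simp
      · simp [Pi.single_eq_of_ne h, h]
    have hterm : ∀ k : Fin ℓ, (aeval p) (pderiv k (f * X s)) * pderiv j (p k)
        = (aeval p) (pderiv k f) * pderiv j (p k) * p s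
          + (aeval p) f * (if s = k then pderiv j (p k) else 0) := by
      intro k
      rw [pderiv_mul, map_add, _root_.map_mul, _root_.map_mul, aeval_X, hXk]
      split <;> ring
    rw [_root_.map_mul, aeval_X, pderiv_mul, hf,
      Finset.sum_congr rfl fun k _ => hterm k, Finset.sum_add_distrib, ← Finset.sum_mul,
      ← Finset.mul_sum, Finset.sum_ite_eq, if_pos (Finset.mem_univ s)]


/-- Proposition 12 of the paper.  With `Δ = det J` the product of the
defining linear forms of the arrangement and `Δ² = a(p₁,…,p_ℓ)`, one has
`∂_{p_i}(Δ²)·m^ℓ_j − ∂_{p_ℓ}(Δ²)·m^i_j ∈ (Δ)` where `m^i_j` are the entries of the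
adjugate of `Jᵗ`. -/


theorem statement4 (n : ℕ) (W : Subgroup (GL (Fin (n + 1)) ℂ))
    (hW : IsFiniteCoxeterGroup (n + 1) W) (hirr : IsIrreducibleRep (n + 1) W)
    (p : Fin (n + 1) → MvPolynomial (Fin (n + 1)) ℂ) (d : Fin (n + 1) → ℕ)
    (hp : AreBasicInvariants (n + 1) W p d) (hd : Monotone d)
    (α : Finset (MvPolynomial (Fin (n + 1)) ℂ)) (hα : AreDefiningForms (n + 1) W α)
    (hdet : (jacobian (n + 1) p).det = ∏ f ∈ α, f)
    (a : MvPolynomial (Fin (n + 1)) ℂ)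
    (ha : aeval p a = (∏ f ∈ α, f) ^ 2) :
    ∀ i j : Fin (n + 1),
      aeval p (pderiv i a) * (jacobian (n + 1) p)ᵀ.adjugate (Fin.last n) j
        - aeval p (pderiv (Fin.last n) a) * (jacobian (n + 1) p)ᵀ.adjugate i j
        ∈ Ideal.span {∏ f ∈ α, f} := by
  intro i j
  classical
  set Δ : MvPolynomial (Fin (n + 1)) ℂ := ∏ f ∈ α, f with hΔdef
  have hΔ : Δ ≠ 0 := by
    rw [hΔdef, Finset.prod_ne_zero_iff]
    intro f hf hf0
    have hmem : zeroSet (n + 1) f ∈ ReflArrangement (n + 1) W := by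
      rw [← hα.onto]
      exact ⟨f, hf, rfl⟩
    obtain ⟨w, hwW, hwrefl, hH⟩ := hmem
    have huniv : ∀ v : Fin (n + 1) → ℂ,
        (↑w : Matrix (Fin (n + 1)) (Fin (n + 1)) ℂ).mulVec v = v := by
      intro v
      have hv : v ∈ zeroSet (n + 1) f := by simp [zeroSet, hf0]
      rw [hH] at hv
      exact hv
    have hker : LinearMap.ker ((↑w : Matrix (Fin (n + 1)) (Fin (n + 1)) ℂ).mulVecLin
        - (LinearMap.id : (Fin (n + 1) → ℂ) →ₗ[ℂ] (Fin (n + 1) → ℂ))) = ⊤ := by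
      rw [LinearMap.ker_eq_top]
      apply LinearMap.ext
      intro v
      simp only [LinearMap.sub_apply, Matrix.mulVecLin_apply, LinearMap.id_apply,
        LinearMap.zero_apply, huniv v, sub_self]
    have hrank := hwrefl.2.2
    rw [hker, finrank_top, Module.finrank_fin_fun] at hrank
    omega
  set A : Matrix (Fin (n + 1)) (Fin (n + 1)) (MvPolynomial (Fin (n + 1)) ℂ) :=
    (jacobian (n + 1) p)ᵀ with hAdef
  have hdetA : A.det = Δ := by rw [hAdef, Matrix.det_transpose, hdet]
  set D : Fin (n + 1) → MvPolynomial (Fin (n + 1)) ℂ := fun k => aeval p (pderiv k a)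
    with hDdef
  have hmv : A.mulVec D = fun k => pderiv k (Δ ^ 2) := by
    funext k
    calc A.mulVec D k = ∑ t, A k t * D t := rfl
      _ = ∑ t, aeval p (pderiv t a) * pderiv k (p t) := by
          apply Finset.sum_congr rfl
          intro t _
          rw [hAdef, hDdef]
          simp only [Matrix.transpose_apply, jacobian, Matrix.of_apply]
          ring
      _ = pderiv k (aeval p a) := (pderiv_aeval_self p k a).symm
      _ = pderiv k (Δ ^ 2) := by rw [ha]
  have hkey : ∀ r : Fin (n + 1), Δ * D r = ∑ t, A.adjugate r t * pderiv t (Δ ^ 2) := by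
    intro r
    have h2 : A.adjugate.mulVec (A.mulVec D) = Δ • D := by
      rw [Matrix.mulVec_mulVec, Matrix.adjugate_mul, hdetA, Matrix.smul_mulVec,
        Matrix.one_mulVec]
    have h3 := congrFun h2 r
    rw [hmv] at h3
    have h4 : (∑ t, A.adjugate r t * pderiv t (Δ ^ 2)) = Δ * D r := h3
    exact h4.symm
  rw [Ideal.mem_span_singleton]
  show Δ ∣ D i * A.adjugate (Fin.last n) j - D (Fin.last n) * A.adjugate i j
  have hmul : Δ * (D i * A.adjugate (Fin.last n) j - D (Fin.last n) * A.adjugate i j)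
      = ∑ t, pderiv t (Δ ^ 2) * (A.adjugate i t * A.adjugate (Fin.last n) j
          - A.adjugate (Fin.last n) t * A.adjugate i j) := by
    rw [mul_sub, ← mul_assoc, ← mul_assoc, hkey i, hkey (Fin.last n), Finset.sum_mul,
      Finset.sum_mul, ← Finset.sum_sub_distrib]
    apply Finset.sum_congr rfl
    intro t _
    ring
  have hdvd : Δ * Δ ∣ Δ * (D i * A.adjugate (Fin.last n) j
      - D (Fin.last n) * A.adjugate i j) := by
    rw [hmul]
    apply Finset.dvd_sum
    intro t _
    apply mul_dvd_mul
    · exact ⟨2 * pderiv t Δ, by rw [pderiv_pow]; push_cast; ring⟩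
    · have h5 := adjugate_minor_dvd A (by rw [hdetA]; exact hΔ) i (Fin.last n) t j
      rw [hdetA] at h5
      exact h5
  obtain ⟨c, hc⟩ := hdvd
  refine ⟨c, ?_⟩
  apply mul_left_cancel₀ hΔ
  rw [hc]
  ring
end

section
/- Let S = ℂ[x₁,…,x_n] and let A be an n×n matrix over S with Δ := det A ≠ 0. Suppose the first column of A is an Euler-like field for Δ and the remaining columns annihilate Δ: Σ_{i=1}^n A_{i,1}·(∂Δ/∂x_i) = d·Δ for some nonzero scalar d ∈ ℂ, and Σ_{i=1}^n A_{i,k}·(∂Δ/∂x_i) = 0 for all k ≥ 2. Then for every j = 1,…,n one has ∂Δ/∂x_j = d·(adj A)_{1,j}, where adj A is the adjugate matrix of A. -/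
open MvPolynomial Matrix

/-- identity (157) of the paper.  If the first column of `A` is an
Euler-like field for `Δ = det A` (`δ₁(Δ) = d·Δ`, `d ∈ ℂˣ`) and the remaining columns
annihilate `Δ`, then `∂Δ/∂xⱼ = d·(adj A)_{1,j}` for every `j`. -/
theorem statement7 (n : ℕ) (hn : 1 ≤ n)
    (A : Matrix (Fin n) (Fin n) (MvPolynomial (Fin n) ℂ))
    (hΔ : A.det ≠ 0) (d : ℂ) (hd : d ≠ 0)
    (hEuler : ∑ i : Fin n, A i ⟨0, hn⟩ * pderiv i A.det = C d * A.det)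
    (hAnn : ∀ k : Fin n, k ≠ ⟨0, hn⟩ → ∑ i : Fin n, A i k * pderiv i A.det = 0) :
    ∀ j : Fin n, pderiv j A.det = C d * adjugate A ⟨0, hn⟩ j := by
  intro j
  set Δ := A.det with hΔdef
  set w : Fin n → MvPolynomial (Fin n) ℂ :=
    fun i => pderiv i Δ - C d * adjugate A ⟨0, hn⟩ i with hw
  -- w · A = 0 (each component)
  have key : ∀ k : Fin n, ∑ i, w i * A i k = 0 := by
    intro k
    have hadj : ∑ i, adjugate A ⟨0, hn⟩ i * A i k = (adjugate A * A) ⟨0, hn⟩ k := by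
      simp [Matrix.mul_apply]
    have hadj2 : (adjugate A * A) ⟨0, hn⟩ k
        = if (⟨0, hn⟩ : Fin n) = k then Δ else 0 := by
      rw [adjugate_mul]
      simp [Matrix.smul_apply, Matrix.one_apply]
      rfl
    have hsplit : ∑ i, w i * A i k
        = (∑ i, A i k * pderiv i Δ) - C d * ∑ i, adjugate A ⟨0, hn⟩ i * A i k := by
      rw [Finset.mul_sum, ← Finset.sum_sub_distrib]
      congr 1; funext i; simp only [hw]; ring
    rw [hsplit, hadj, hadj2]
    by_cases hk : k = ⟨0, hn⟩
    · subst hk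
      rw [hEuler]
      simp
    · rw [hAnn k hk]
      simp [Ne.symm hk]
  -- multiply by adjugate on the right to conclude Δ * w j = 0
  have hmul : Δ * w j = 0 := by
    have h1 : ∑ i, w i * (A * adjugate A) i j = Δ * w j := by
      rw [mul_adjugate]
      simp only [Matrix.smul_apply, Matrix.one_apply, smul_eq_mul, mul_ite, mul_zero, mul_one]
      rw [Finset.sum_ite_eq' Finset.univ j (fun x => w x * A.det)]
      simp [mul_comm]
      exact Or.inl rfl
    have h2 : ∑ i, w i * (A * adjugate A) i j
        = ∑ k, (∑ i, w i * A i k) * adjugate A k j := by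
      simp only [Matrix.mul_apply, Finset.mul_sum, ← mul_assoc, Finset.sum_mul]
      exact Finset.sum_comm ..
    rw [← h1, h2]
    simp [key]
  rcases mul_eq_zero.mp hmul with h | h
  · exact absurd h hΔ
  · have := sub_eq_zero.mp h
    exact this
end

section
/- Let ℓ ≥ 4 and S = ℂ[x₁,…,x_ℓ]. Define the power sums q_k := Σ_{i=1}^ℓ x_i^{2k} for k = 1,…,ℓ−1, the product e := x₁⋯x_ℓ, and let F ⊆ S be the ideal generated by q₁,…,q_{ℓ−1} and e (the ideal generated by the basic invariants of the Coxeter group of type D_ℓ). Then there exists a nonzero scalar c ∈ ℂˣ such that Σ_{j=1}^ℓ ∏_{k≠j} x_k² − c·q_{ℓ−1} ∈ F². -/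
open MvPolynomial

section Aux

variable (ℓ : ℕ)

/-- the ideal generated by `psum 1, …, psum (ℓ-1)` in the `y`-variables -/
noncomputable def pIdeal : Ideal (MvPolynomial (Fin ℓ) ℂ) :=
  Ideal.span {p | ∃ j, 1 ≤ j ∧ j ≤ ℓ - 1 ∧ p = psum (Fin ℓ) ℂ j}

lemma psum_mem_pIdeal {j : ℕ} (h1 : 1 ≤ j) (h2 : j ≤ ℓ - 1) :
    psum (Fin ℓ) ℂ j ∈ pIdeal ℓ :=
  Ideal.subset_span ⟨j, h1, h2, rfl⟩

lemma esymm_mem_pIdeal : ∀ k, 1 ≤ k → k ≤ ℓ - 1 →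
    esymm (Fin ℓ) ℂ k ∈ pIdeal ℓ := by
  intro k
  induction k using Nat.strong_induction_on with
  | _ k ih =>
    intro h1 h2
    have hne : ((k : ℂ)) ≠ 0 := Nat.cast_ne_zero.mpr (by omega)
    have key := mul_esymm_eq_sum (Fin ℓ) ℂ k
    have hsum : ((k : MvPolynomial (Fin ℓ) ℂ) * esymm (Fin ℓ) ℂ k) ∈ pIdeal ℓ := by
      rw [key]
      refine Ideal.mul_mem_left _ _ (Ideal.sum_mem _ ?_)
      rintro ⟨a, b⟩ hab
      simp only [Finset.mem_filter, Finset.HasAntidiagonal.mem_antidiagonal] at hab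
      exact Ideal.mul_mem_left _ _ (psum_mem_pIdeal ℓ (by omega) (by omega))
    have heq2 : esymm (Fin ℓ) ℂ k =
        C ((k : ℂ)⁻¹) * ((k : MvPolynomial (Fin ℓ) ℂ) * esymm (Fin ℓ) ℂ k) := by
      rw [show ((k : MvPolynomial (Fin ℓ) ℂ)) = C ((k : ℕ) : ℂ) from
          (map_natCast (C : ℂ →+* _) k).symm,
        ← mul_assoc, ← C_mul, inv_mul_cancel₀ hne, C_1, one_mul]
    rw [heq2]
    exact Ideal.mul_mem_left _ _ hsum

lemma keylemma (h4 : 4 ≤ ℓ) :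
    esymm (Fin ℓ) ℂ (ℓ - 1) - C ((-1) ^ ℓ / ((ℓ : ℂ) - 1)) * psum (Fin ℓ) ℂ (ℓ - 1)
      ∈ (pIdeal ℓ) ^ 2 := by
  have hne : ((ℓ : ℂ) - 1) ≠ 0 :=
    sub_ne_zero.mpr (by exact_mod_cast (by omega : ℓ ≠ 1))
  have key := mul_esymm_eq_sum (Fin ℓ) ℂ (ℓ - 1)
  -- split off the a = (0, ℓ-1) term
  have hmem : ((0, ℓ - 1) : ℕ × ℕ) ∈
      Finset.filter (fun a => a.1 < ℓ - 1) (Finset.HasAntidiagonal.antidiagonal (ℓ - 1)) := by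
    simp only [Finset.mem_filter, Finset.HasAntidiagonal.mem_antidiagonal]
    omega
  rw [← Finset.add_sum_erase _ _ hmem] at key
  set S : MvPolynomial (Fin ℓ) ℂ := ∑ a ∈ (Finset.filter (fun a => a.1 < ℓ - 1)
        (Finset.HasAntidiagonal.antidiagonal (ℓ - 1))).erase (0, ℓ - 1),
      (-1) ^ a.1 * esymm (Fin ℓ) ℂ a.1 * psum (Fin ℓ) ℂ a.2 with hS
  have hrest : S ∈ (pIdeal ℓ) ^ 2 := by
    refine Ideal.sum_mem _ ?_
    rintro ⟨a, b⟩ hab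
    obtain ⟨hne', hfilt⟩ := Finset.mem_erase.mp hab
    obtain ⟨hanti, halt⟩ := Finset.mem_filter.mp hfilt
    have hab2 : a + b = ℓ - 1 := Finset.HasAntidiagonal.mem_antidiagonal.mp hanti
    have ha1 : 1 ≤ a := by
      rcases Nat.eq_zero_or_pos a with h0 | h0
      · exfalso; apply hne'; subst h0; simp only [Prod.mk.injEq, true_and]; omega
      · exact h0
    have hmul : esymm (Fin ℓ) ℂ a * psum (Fin ℓ) ℂ b ∈ (pIdeal ℓ) ^ 2 := by
      rw [sq]
      exact Ideal.mul_mem_mul (esymm_mem_pIdeal ℓ a ha1 (by omega))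
        (psum_mem_pIdeal ℓ (by omega) (by omega))
    rw [mul_assoc]
    exact Ideal.mul_mem_left _ _ hmul
  -- rewrite key into nicer form
  have hcast : ((ℓ - 1 : ℕ) : MvPolynomial (Fin ℓ) ℂ) = C ((ℓ : ℂ) - 1) := by
    rw [← map_natCast (C : ℂ →+* MvPolynomial (Fin ℓ) ℂ) (ℓ - 1)]
    congr 1
    rw [Nat.cast_sub (by omega : 1 ≤ ℓ), Nat.cast_one]
  rw [hcast] at key
  have hsign : ((-1 : MvPolynomial (Fin ℓ) ℂ)) ^ (ℓ - 1 + 1) = C ((-1 : ℂ) ^ ℓ) := by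
    rw [show ℓ - 1 + 1 = ℓ by omega, C_pow, C_neg, C_1]
  rw [hsign] at key
  have h0 : ((-1 : MvPolynomial (Fin ℓ) ℂ)) ^ (0:ℕ) * esymm (Fin ℓ) ℂ 0 *
      psum (Fin ℓ) ℂ (ℓ - 1) = psum (Fin ℓ) ℂ (ℓ - 1) := by
    simp [esymm_zero]
  rw [h0] at key
  -- key : C (ℓ-1) * esymm (ℓ-1) = C ((-1)^ℓ) * (psum (ℓ-1) + S)
  have hinv : (C (((ℓ:ℂ)-1)⁻¹) : MvPolynomial (Fin ℓ) ℂ) * C ((ℓ:ℂ)-1) = 1 := by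
    rw [← C_mul, inv_mul_cancel₀ hne, C_1]
  have hdiv : (C ((-1:ℂ)^ℓ / ((ℓ:ℂ)-1)) : MvPolynomial (Fin ℓ) ℂ) =
      C (((ℓ:ℂ)-1)⁻¹) * C ((-1:ℂ)^ℓ) := by
    rw [← C_mul, div_eq_mul_inv, mul_comm]
  have heq : esymm (Fin ℓ) ℂ (ℓ - 1) - C ((-1) ^ ℓ / ((ℓ : ℂ) - 1)) * psum (Fin ℓ) ℂ (ℓ - 1)
      = C ((-1) ^ ℓ / ((ℓ : ℂ) - 1)) * S := by
    calc esymm (Fin ℓ) ℂ (ℓ - 1) - C ((-1) ^ ℓ / ((ℓ : ℂ) - 1)) * psum (Fin ℓ) ℂ (ℓ - 1)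
        = C (((ℓ:ℂ)-1)⁻¹) * (C ((ℓ:ℂ)-1) * esymm (Fin ℓ) ℂ (ℓ - 1))
            - C ((-1) ^ ℓ / ((ℓ : ℂ) - 1)) * psum (Fin ℓ) ℂ (ℓ - 1) := by
          rw [← mul_assoc, hinv, one_mul]
      _ = C (((ℓ:ℂ)-1)⁻¹) * (C ((-1:ℂ)^ℓ) * (psum (Fin ℓ) ℂ (ℓ - 1) + S))
            - C ((-1) ^ ℓ / ((ℓ : ℂ) - 1)) * psum (Fin ℓ) ℂ (ℓ - 1) := by rw [key]
      _ = C ((-1) ^ ℓ / ((ℓ : ℂ) - 1)) * S := by rw [hdiv]; ring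
  rw [heq]
  exact Ideal.mul_mem_left _ _ hrest

end Aux

/-- the claim `p̂_{ℓ−1} ≡ c·p_{ℓ−1} mod F²` in the proof of
Theorem 221 of the paper, type `D_ℓ`.  With `q_k = ∑ xᵢ^{2k}` (`k = 1,…,ℓ−1`),
`e = x₁⋯x_ℓ` and `F = (q₁,…,q_{ℓ−1}, e)`, there is `c ≠ 0` with
`∑ⱼ ∏_{k≠j} x_k² − c·q_{ℓ−1} ∈ F²`. -/
theorem statement17 (ℓ : ℕ) (h4 : 4 ≤ ℓ) :
    ∃ c : ℂ, c ≠ 0 ∧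
      (∑ j : Fin ℓ, ∏ k ∈ Finset.univ.erase j, (X k : MvPolynomial (Fin ℓ) ℂ) ^ 2)
          - C c * (∑ i : Fin ℓ, X i ^ (2 * (ℓ - 1)))
        ∈ (Ideal.span
            ((Set.range fun k : Fin (ℓ - 1) =>
                (∑ i : Fin ℓ, X i ^ (2 * ((k : ℕ) + 1)) : MvPolynomial (Fin ℓ) ℂ))
              ∪ {∏ i : Fin ℓ, X i})) ^ 2 := by
  set c : ℂ := (-1) ^ ℓ / ((ℓ : ℂ) - 1) with hc
  have hℓne : ((ℓ : ℂ) - 1) ≠ 0 :=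
    sub_ne_zero.mpr (by exact_mod_cast (by omega : ℓ ≠ 1))
  have hcne : c ≠ 0 := by
    rw [hc]
    exact div_ne_zero (pow_ne_zero _ (by norm_num)) hℓne
  refine ⟨c, hcne, ?_⟩
  set φ : MvPolynomial (Fin ℓ) ℂ →ₐ[ℂ] MvPolynomial (Fin ℓ) ℂ :=
    aeval (fun i => (X i) ^ 2) with hφ
  set F : Ideal (MvPolynomial (Fin ℓ) ℂ) := Ideal.span
      ((Set.range fun k : Fin (ℓ - 1) =>
          (∑ i : Fin ℓ, X i ^ (2 * ((k : ℕ) + 1)) : MvPolynomial (Fin ℓ) ℂ))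
        ∪ {∏ i : Fin ℓ, X i}) with hF
  -- φ of psum j
  have hpsum : ∀ j : ℕ, φ (psum (Fin ℓ) ℂ j) = ∑ i : Fin ℓ, X i ^ (2 * j) := by
    intro j
    simp only [psum, map_sum, map_pow, hφ, aeval_X, ← pow_mul]
  -- φ maps the pIdeal into F
  have hmap : ∀ p ∈ (pIdeal ℓ) ^ 2, φ p ∈ F ^ 2 := by
    intro p hp
    have h1 : Ideal.map φ ((pIdeal ℓ) ^ 2) ≤ F ^ 2 := by
      rw [Ideal.map_pow]
      refine Ideal.pow_right_mono ?_ 2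
      unfold pIdeal
      rw [Ideal.map_span]
      refine Ideal.span_le.mpr ?_
      rintro q ⟨r, ⟨j, hj1, hj2, rfl⟩, rfl⟩
      have : φ (psum (Fin ℓ) ℂ j) ∈ (Set.range fun k : Fin (ℓ - 1) =>
            (∑ i : Fin ℓ, X i ^ (2 * ((k : ℕ) + 1)) : MvPolynomial (Fin ℓ) ℂ))
          ∪ {∏ i : Fin ℓ, X i} := by
        left
        refine ⟨⟨j - 1, by omega⟩, ?_⟩
        have h2j : 2 * j = 2 * ((j - 1) + 1) := by omega
        rw [hpsum, h2j]
      exact Ideal.subset_span this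
    exact h1 (Ideal.mem_map_of_mem _ hp)
  -- φ of esymm (ℓ-1)
  have hesymm : φ (esymm (Fin ℓ) ℂ (ℓ - 1)) =
      ∑ j : Fin ℓ, ∏ k ∈ Finset.univ.erase j, (X k : MvPolynomial (Fin ℓ) ℂ) ^ 2 := by
    rw [esymm]
    have hps : Finset.powersetCard (ℓ - 1) (Finset.univ : Finset (Fin ℓ)) =
        Finset.univ.image (fun j : Fin ℓ => Finset.univ.erase j) := by
      ext A
      simp only [Finset.mem_powersetCard, Finset.mem_image, Finset.mem_univ, true_and]
      constructor
      · rintro ⟨hsub, hcard⟩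
        have hc1 : (Finset.univ \ A).card = 1 := by
          rw [Finset.card_sdiff_of_subset hsub, Finset.card_univ, Fintype.card_fin, hcard]
          omega
        obtain ⟨j, hj⟩ := Finset.card_eq_one.mp hc1
        refine ⟨j, ?_⟩
        ext x
        have hx := Finset.ext_iff.mp hj x
        simp only [Finset.mem_sdiff, Finset.mem_univ, true_and,
          Finset.mem_singleton] at hx
        simp only [Finset.mem_erase, Finset.mem_univ, and_true]
        constructor
        · intro hne2
          by_contra hxA
          exact hne2 (hx.mp hxA)
        · intro hxA hxj
          exact (hx.mpr hxj) hxA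
      · rintro ⟨j, rfl⟩
        refine ⟨Finset.subset_univ _, ?_⟩
        rw [Finset.card_erase_of_mem (Finset.mem_univ j), Finset.card_univ, Fintype.card_fin]
    rw [hps, Finset.sum_image (fun a _ b _ h => ?inj)]
    · simp only [map_sum, map_prod, map_pow, hφ, aeval_X]
    case inj =>
      by_contra hne
      have : a ∈ Finset.univ.erase b := Finset.mem_erase.mpr ⟨hne, Finset.mem_univ a⟩
      rw [← h] at this
      exact (Finset.notMem_erase a _) this
  have hCc : φ (C c) = C c := by simp [hφ]
  have hfin := hmap _ (keylemma ℓ h4)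
  rw [map_sub, map_mul, hCc, hesymm, hpsum] at hfin
  exact hfin
end
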